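/- If {u_j} is a sequence of F-subharmonic functions on an open set X ⊂ ℝⁿ that decreases pointwise (u_j ≥ u_{j+1}), then the limit u = lim_j u_j is F-subharmonic on X. -/

import Mathlib

open Pointwise

/-- The 2-jet space `J² = ℝ × ℝⁿ × Sym²(ℝⁿ)`. -/
abbrev Jet2 (n : ℕ) : Type :=
  ℝ × (EuclideanSpace ℝ (Fin n) →L[ℝ] ℝ) ×
    (EuclideanSpace ℝ (Fin n) →L[ℝ] EuclideanSpace ℝ (Fin n) →L[ℝ] ℝ)

/-- The 2-jet `(φ(x), Dφ(x), D²φ(x))` of a function `φ` at `x`. -/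
noncomputable def jet {n : ℕ} (φ : EuclideanSpace ℝ (Fin n) → ℝ)
    (x : EuclideanSpace ℝ (Fin n)) : Jet2 n :=
  (φ x, fderiv ℝ φ x, fderiv ℝ (fun y => fderiv ℝ φ y) x)

/-- Viscosity `F`-subharmonicity on `X` for a `[−∞,∞)`-valued function `u`. -/
def IsFSubharmonic {n : ℕ} (F : Set (Jet2 n)) (X : Set (EuclideanSpace ℝ (Fin n)))
    (u : EuclideanSpace ℝ (Fin n) → EReal) : Prop :=
  ∀ x ∈ X, ∀ (φ : EuclideanSpace ℝ (Fin n) → ℝ) (V : Set (EuclideanSpace ℝ (Fin n))),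
    IsOpen V → x ∈ V → ContDiffOn ℝ 2 φ V →
    (∀ y ∈ V, u y ≤ (φ y : EReal)) → u x = (φ x : EReal) → jet φ x ∈ F


section Helpers
open Filter Topology

/-- An upper semicontinuous `EReal`-valued function attains its max on a nonempty compact set. -/
lemma usc_exists_max {α : Type*} [TopologicalSpace α] {K : Set α} (hK : IsCompact K)
    (hne : K.Nonempty) {f : α → EReal} (hf : UpperSemicontinuousOn f K) :
    ∃ x ∈ K, ∀ y ∈ K, f y ≤ f x := by
  by_contra h
  push_neg at h
  -- for each x ∈ K, choose y ∈ K with f x < f y, and a real strictly between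
  choose y hyK hlt using h
  have hc : ∀ (x : α) (hx : x ∈ K), ∃ c : ℝ, f x < (c : EReal) ∧ (c : EReal) < f (y x hx) :=
    fun x hx => EReal.exists_between_coe_real (hlt x hx)
  choose c hc1 hc2 using hc
  -- neighborhoods where f < c x
  have hU : ∀ (x : α) (hx : x ∈ K), ∃ U : Set α, IsOpen U ∧ x ∈ U ∧
      ∀ z ∈ U ∩ K, f z < (c x hx : EReal) := by
    intro x hx
    have := hf x hx _ (hc1 x hx)
    rcases mem_nhdsWithin.1 this with ⟨U, hUo, hxU, hUsub⟩
    exact ⟨U, hUo, hxU, fun z hz => hUsub hz⟩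
  choose U hUo hxU hUlt using hU
  obtain ⟨t, ht⟩ := hK.elim_nhds_subcover' (fun x hx => U x hx)
    (fun x hx => (hUo x hx).mem_nhds (hxU x hx))
  have htne : t.Nonempty := by
    obtain ⟨z, hz⟩ := hne
    rcases Set.mem_iUnion₂.1 (ht hz) with ⟨x, hx, _⟩
    exact ⟨x, hx⟩
  obtain ⟨x₀, hx₀t, hx₀max⟩ := t.exists_max_image (fun x => f (y x.1 x.2)) htne
  -- y x₀ ∈ K is covered by some U x₁
  rcases Set.mem_iUnion₂.1 (ht (hyK x₀.1 x₀.2)) with ⟨x₁, hx₁t, hy₀U⟩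
  have h1 : f (y x₀.1 x₀.2) < (c x₁.1 x₁.2 : EReal) :=
    hUlt x₁.1 x₁.2 _ ⟨hy₀U, hyK x₀.1 x₀.2⟩
  have h2 : (c x₁.1 x₁.2 : EReal) < f (y x₁.1 x₁.2) := hc2 x₁.1 x₁.2
  exact absurd (hx₀max x₁ hx₁t) (not_le.2 (h1.trans h2))

/-- Dini-type lemma: a decreasing sequence of USC functions whose inf is everywhere strictly
below a continuous function `w` on a compact set is eventually (uniformly) below `w`. -/
lemma dini_usc {α : Type*} [TopologicalSpace α] {K : Set α} (hK : IsCompact K)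
    {u : ℕ → α → EReal} (husc : ∀ j, UpperSemicontinuousOn (u j) K)
    (hdec : ∀ x, Antitone fun j => u j x)
    {w : α → ℝ} (hw : ContinuousOn w K)
    (hlt : ∀ y ∈ K, (⨅ j, u j y) < ((w y : ℝ) : EReal)) :
    ∃ j₀, ∀ j ≥ j₀, ∀ y ∈ K, u j y < ((w y : ℝ) : EReal) := by
  have key : ∀ (x : α) (hx : x ∈ K), ∃ j : ℕ, ∃ U : Set α, IsOpen U ∧ x ∈ U ∧
      ∀ z ∈ U ∩ K, u j z < ((w z : ℝ) : EReal) := by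
    intro x hx
    obtain ⟨j, hj⟩ := iInf_lt_iff.1 (hlt x hx)
    obtain ⟨t, ht1, ht2⟩ := EReal.exists_between_coe_real hj
    have hev1 : ∀ᶠ z in nhdsWithin x K, u j z < (t : EReal) := husc j x hx _ ht1
    have hev2 : ∀ᶠ z in nhdsWithin x K, (t : EReal) < ((w z : ℝ) : EReal) := by
      have : ∀ᶠ z in nhdsWithin x K, w z ∈ Set.Ioi t :=
        (hw x hx).eventually_mem (isOpen_Ioi.mem_nhds (by exact_mod_cast ht2))
      exact this.mono fun z hz => by exact_mod_cast hz
    have := hev1.and hev2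
    rcases mem_nhdsWithin.1 this with ⟨U, hUo, hxU, hUsub⟩
    exact ⟨j, U, hUo, hxU, fun z hz => (hUsub hz).1.trans (hUsub hz).2⟩
  choose j U hUo hxU hUlt using key
  obtain ⟨t, ht⟩ := hK.elim_nhds_subcover' (fun x hx => U x hx)
    (fun x hx => (hUo x hx).mem_nhds (hxU x hx))
  refine ⟨t.sup (fun x => j x.1 x.2), fun k hk y hy => ?_⟩
  rcases Set.mem_iUnion₂.1 (ht hy) with ⟨x, hxt, hyU⟩
  have h1 : u (j x.1 x.2) y < ((w y : ℝ) : EReal) := hUlt x.1 x.2 y ⟨hyU, hy⟩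
  exact lt_of_le_of_lt (hdec y (le_trans (Finset.le_sup hxt) hk)) h1

/-- USC minus a continuous real function is USC (for nowhere-`⊤` functions). -/
lemma usc_sub_cont {α : Type*} [TopologicalSpace α] {K : Set α} {f : α → EReal} {w : α → ℝ}
    (hf : UpperSemicontinuousOn f K) (hftop : ∀ y, f y ≠ ⊤) (hw : ContinuousOn w K) :
    UpperSemicontinuousOn (fun y => f y - ((w y : ℝ) : EReal)) K := by
  intro z hz c hc
  rcases eq_or_ne c ⊤ with rfl | hcT
  · refine Filter.Eventually.of_forall fun y => ?_
    have : f y - ((w y : ℝ) : EReal) < ⊤ :=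
      EReal.add_lt_top (hftop y) (by simp)
    exact this
  · obtain ⟨s, hs1, hs2⟩ := EReal.exists_between_coe_real hc
    obtain ⟨t, ht1, ht2⟩ := EReal.exists_between_coe_real hs1
    -- f z - w z < t, t < s, s < c
    have hts : t < s := by exact_mod_cast ht2
    have hev1 : ∀ᶠ y in nhdsWithin z K, f y < ((t + w z : ℝ) : EReal) := by
      apply hf z hz
      have h' : f z < (t : EReal) + ((w z : ℝ) : EReal) :=
        (EReal.sub_lt_iff (a := (t : EReal)) (b := ((w z : ℝ) : EReal)) (c := f z)
          (Or.inl (by simp)) (Or.inl (by simp))).1 ht1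
      exact_mod_cast h'
    have hev2 : ∀ᶠ y in nhdsWithin z K, w z - w y < s - t := by
      have : ∀ᶠ y in nhdsWithin z K, w y ∈ Set.Ioi (w z - (s - t)) :=
        (hw z hz).eventually_mem (isOpen_Ioi.mem_nhds (Set.mem_Ioi.2 (by linarith)))
      exact this.mono fun y hy => by simp only [Set.mem_Ioi] at hy; linarith
    filter_upwards [hev1, hev2] with y h1 h2
    have step1 : f y - ((w y : ℝ) : EReal) < ((t + w z : ℝ) : EReal) - ((w y : ℝ) : EReal) :=
      EReal.sub_lt_sub_of_lt_of_le h1 le_rfl (by simp) (by simp)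
    have step2 : ((t + w z : ℝ) : EReal) - ((w y : ℝ) : EReal) = ((t + w z - w y : ℝ) : EReal) := by
      rw [← EReal.coe_sub]
    have step3 : (t + w z - w y : ℝ) < s := by linarith
    calc f y - ((w y : ℝ) : EReal) < ((t + w z - w y : ℝ) : EReal) := by rw [← step2]; exact step1
      _ < (s : EReal) := by exact_mod_cast step3
      _ < c := hs2


variable {E : Type*} [NormedAddCommGroup E] [InnerProductSpace ℝ E]

noncomputable def innerB (E : Type*) [NormedAddCommGroup E] [InnerProductSpace ℝ E] :
    E →L[ℝ] E →L[ℝ] ℝ := innerSL ℝ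

lemma hasFDerivAt_quad (ε : ℝ) (c x : E) :
    HasFDerivAt (fun y => ε * ‖y - c‖ ^ 2) (((2 * ε) • innerB E) (x - c)) x := by
  have h1 : HasFDerivAt (fun y : E => y - c) (ContinuousLinearMap.id ℝ E) x :=
    (hasFDerivAt_id x).sub_const c
  have h2 := h1.norm_sq
  have h3 := h2.const_mul ε
  refine h3.congr_fderiv ?_
  ext w
  simp [innerB, smul_smul]
  rw [innerSL_apply_apply, innerSL_apply_apply]
  ring

lemma hasFDerivAt_Dquad (ε : ℝ) (c x : E) :
    HasFDerivAt (fun y : E => ((2 * ε) • innerB E) (y - c)) ((2 * ε) • innerB E) x := by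
  have h1 : HasFDerivAt (fun y : E => y - c) (ContinuousLinearMap.id ℝ E) x :=
    (hasFDerivAt_id x).sub_const c
  have := ((2 * ε) • innerB E).hasFDerivAt.comp x h1
  rw [ContinuousLinearMap.comp_id] at this
  exact this

lemma contDiff_quad (ε : ℝ) (c : E) : ContDiff ℝ 2 (fun y : E => ε * ‖y - c‖ ^ 2) :=
  contDiff_const.mul ((contDiff_id.sub contDiff_const).norm_sq ℝ)

end Helpers

section Main

open Filter Topology Metric

set_option maxHeartbeats 1000000 in
set_option synthInstance.maxHeartbeats 200000 in
/-- **Decreasing Sequence Property, Theorem 2.3.1(iii).** If `{u_j}` is a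
pointwise decreasing sequence of upper semicontinuous `F`-subharmonic functions on an
open set `X ⊂ ℝⁿ` (`F ⊂ J²` closed), then the pointwise limit `u = lim_j u_j = inf_j u_j`
is `F`-subharmonic on `X`. -/
theorem decreasing_limit_subharmonic (n : ℕ) (F : Set (Jet2 n)) (hF : IsClosed F)
    (X : Set (EuclideanSpace ℝ (Fin n))) (hX : IsOpen X)
    (u : ℕ → EuclideanSpace ℝ (Fin n) → EReal)
    (husc : ∀ j, UpperSemicontinuousOn (u j) X)
    (hfin : ∀ j x, u j x ≠ ⊤)
    (hdec : ∀ x, Antitone (fun j => u j x))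
    (hsub : ∀ j, IsFSubharmonic F X (u j)) :
    IsFSubharmonic F X (fun x => ⨅ j, u j x) := by
  intro x₀ hx₀ φ V hV hx₀V hφ hle heq
  simp only at heq hle
  -- a closed ball around x₀ inside X ∩ V
  obtain ⟨r, hr0, hrsub⟩ : ∃ r > 0, Metric.closedBall x₀ r ⊆ X ∩ V := by
    have hmem : X ∩ V ∈ 𝓝 x₀ := Filter.inter_mem (hX.mem_nhds hx₀) (hV.mem_nhds hx₀V)
    rcases Metric.nhds_basis_closedBall.mem_iff.1 hmem with ⟨r, hr, h⟩
    exact ⟨r, hr, h⟩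
  set K := Metric.closedBall x₀ r with hKdef
  have hKc : IsCompact K := isCompact_closedBall x₀ r
  have hx₀K : x₀ ∈ K := Metric.mem_closedBall_self hr0.le
  have hKX : K ⊆ X := fun y hy => (hrsub hy).1
  have hKV : K ⊆ V := fun y hy => (hrsub hy).2
  have hballK : Metric.ball x₀ r ⊆ K := Metric.ball_subset_closedBall
  -- differentiability data for φ
  have hφdiff : ∀ y ∈ V, DifferentiableAt ℝ φ y := fun y hy =>
    (hφ.differentiableOn (by norm_num)).differentiableAt (hV.mem_nhds hy)
  have hDφC1 : ContDiffOn ℝ 1 (fderiv ℝ φ) V := hφ.fderiv_of_isOpen hV (by norm_num)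
  have hDφdiff : ∀ y ∈ V, DifferentiableAt ℝ (fderiv ℝ φ) y := fun y hy =>
    (hDφC1.differentiableOn (by norm_num)).differentiableAt (hV.mem_nhds hy)
  have hDφcont : ContinuousOn (fderiv ℝ φ) V :=
    hφ.continuousOn_fderiv_of_isOpen hV (by norm_num)
  have hD2φcont : ContinuousOn (fderiv ℝ (fderiv ℝ φ)) V :=
    hDφC1.continuousOn_fderiv_of_isOpen hV le_rfl
  have hφcont : ContinuousOn φ V := hφ.continuousOn
  -- main claim: for each ε > 0 the perturbed jet belongs to F
  have main : ∀ ε : ℝ, 0 < ε →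
      (φ x₀, fderiv ℝ φ x₀,
        fderiv ℝ (fun y => fderiv ℝ φ y) x₀ + (2 * ε) • innerB (EuclideanSpace ℝ (Fin n))) ∈ F := by
    intro ε hε
    set T2 : EuclideanSpace ℝ (Fin n) →L[ℝ] EuclideanSpace ℝ (Fin n) →L[ℝ] ℝ := (2 * ε) • innerB (EuclideanSpace ℝ (Fin n)) with hT2
    set q : EuclideanSpace ℝ (Fin n) → ℝ := fun y => ε * ‖y - x₀‖ ^ 2 with hqdef
    set ψ : EuclideanSpace ℝ (Fin n) → ℝ := fun y => φ y + q y with hψdef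
    have hqcont : Continuous q := (contDiff_quad ε x₀).continuous
    have hψcontV : ContinuousOn ψ V := hφcont.add hqcont.continuousOn
    have hψcont : ContinuousOn ψ K := hψcontV.mono hKV
    set g : ℕ → EuclideanSpace ℝ (Fin n) → EReal := fun j y => u j y - ((ψ y : ℝ) : EReal) with hgdef
    have hgusc : ∀ j, UpperSemicontinuousOn (g j) K :=
      fun j => usc_sub_cont ((husc j).mono hKX) (hfin j) hψcont
    have hmax : ∀ j, ∃ x ∈ K, ∀ y ∈ K, g j y ≤ g j x :=
      fun j => usc_exists_max hKc ⟨x₀, hx₀K⟩ (hgusc j)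
    choose xs hxsK hxsmax using hmax
    have hψx₀ : ψ x₀ = φ x₀ := by simp [hψdef, hqdef]
    have hq0 : ∀ y, 0 ≤ q y := fun y => by positivity
    have hφψ : ∀ y, φ y ≤ ψ y := fun y => by
      have := hq0 y; simp only [hψdef]; linarith
    -- the max value is nonnegative
    have hg0 : ∀ j, (0 : EReal) ≤ g j (xs j) := by
      intro j
      have h1 : (0 : EReal) ≤ g j x₀ := by
        rw [hgdef]
        refine (EReal.le_sub_iff_add_le (Or.inl (by simp)) (Or.inl (by simp))).2 ?_
        rw [zero_add, hψx₀]
        exact heq ▸ iInf_le _ j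
      exact h1.trans (hxsmax j x₀ hx₀K)
    have hubot : ∀ j, u j (xs j) ≠ ⊥ := by
      intro j hbot
      have hb : g j (xs j) = ⊥ := by rw [hgdef]; simp [hbot, EReal.bot_sub]
      have := hg0 j
      rw [hb] at this
      simp at this
    set a : ℕ → ℝ := fun j => (u j (xs j)).toReal with hadef
    have hua : ∀ j, u j (xs j) = ((a j : ℝ) : EReal) :=
      fun j => (EReal.coe_toReal (hfin j (xs j)) (hubot j)).symm
    set m : ℕ → ℝ := fun j => a j - ψ (xs j) with hmdef
    have hgm : ∀ j, g j (xs j) = ((m j : ℝ) : EReal) := by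
      intro j
      rw [hgdef]
      simp only
      rw [hua j, ← EReal.coe_sub]
    have hm0 : ∀ j, 0 ≤ m j := by
      intro j
      have := hg0 j
      rw [hgm j] at this
      exact_mod_cast this
    -- the maximum points converge to x₀
    have hxs_close : ∀ δ : ℝ, 0 < δ → ∃ j₀, ∀ j ≥ j₀, xs j ∈ Metric.ball x₀ δ := by
      intro δ hδ
      set δ' := min δ r with hδ'def
      have hδ'0 : 0 < δ' := lt_min hδ hr0
      set Kδ : Set (EuclideanSpace ℝ (Fin n)) := K \ Metric.ball x₀ δ' with hKδdef
      have hKδc : IsCompact Kδ := by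
        rw [hKδdef, Set.diff_eq]
        exact hKc.inter_right Metric.isOpen_ball.isClosed_compl
      have hKδK : Kδ ⊆ K := Set.diff_subset
      obtain ⟨j₀, hj₀⟩ := dini_usc hKδc
        (fun j => (husc j).mono (hKδK.trans hKX)) hdec
        ((hψcont.mono hKδK).sub continuousOn_const)
        (w := fun y => ψ y - ε * δ' ^ 2 / 2)
        (by
          intro y hy
          have hyK : y ∈ K := hKδK hy
          have hdist : δ' ≤ ‖y - x₀‖ := by
            have : ¬ y ∈ Metric.ball x₀ δ' := hy.2
            rw [Metric.mem_ball, dist_eq_norm] at this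
            linarith [not_lt.1 this]
          have hqy : ε * δ' ^ 2 ≤ q y := by
            have h2 : δ' ^ 2 ≤ ‖y - x₀‖ ^ 2 := pow_le_pow_left₀ hδ'0.le hdist 2
            simp only [hqdef]
            exact mul_le_mul_of_nonneg_left h2 hε.le
          have hlt2 : φ y < ψ y - ε * δ' ^ 2 / 2 := by
            simp only [hψdef]
            linarith [hqy, mul_pos hε (pow_pos hδ'0 2)]
          calc (⨅ j, u j y) ≤ ((φ y : ℝ) : EReal) := hle y (hKV hyK)
            _ < _ := by exact_mod_cast hlt2)
      refine ⟨j₀, fun j hj => ?_⟩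
      by_contra hnot
      have hmem : xs j ∈ Kδ := ⟨hxsK j, fun hball => hnot (Metric.ball_subset_ball (min_le_left δ r) hball)⟩
      have := hj₀ j hj (xs j) hmem
      rw [hua j] at this
      have haj : a j < ψ (xs j) - ε * δ' ^ 2 / 2 := by exact_mod_cast this
      have h2 : (0:ℝ) < ε * δ' ^ 2 := mul_pos hε (pow_pos hδ'0 2)
      have hm0' : (0:ℝ) ≤ a j - ψ (xs j) := hm0 j
      have h5 : ψ (xs j) ≤ a j := sub_nonneg.1 hm0'
      have h3 : ψ (xs j) - ε * δ' ^ 2 / 2 < ψ (xs j) := sub_lt_self _ (half_pos h2)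
      exact absurd (haj.trans h3) h5.not_gt
    -- m j → 0
    have hm_small : ∀ c : ℝ, 0 < c → ∃ j₀, ∀ j ≥ j₀, m j < c := by
      intro c hc
      obtain ⟨j₀, hj₀⟩ := dini_usc hKc (fun j => (husc j).mono hKX) hdec
        (hψcont.add continuousOn_const) (w := fun y => ψ y + c)
        (by
          intro y hy
          calc (⨅ j, u j y) ≤ ((φ y : ℝ) : EReal) := hle y (hKV hy)
            _ < _ := by exact_mod_cast (by linarith [hφψ y] : φ y < ψ y + c))
      refine ⟨j₀, fun j hj => ?_⟩
      have := hj₀ j hj (xs j) (hxsK j)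
      rw [hua j] at this
      have haj : a j < ψ (xs j) + c := by exact_mod_cast this
      rw [hmdef]; simp only; linarith
    have hm_tendsto : Tendsto m atTop (𝓝 0) := by
      rw [tendsto_order]
      constructor
      · intro c hc
        exact Filter.Eventually.of_forall fun j => lt_of_lt_of_le hc (hm0 j)
      · intro c hc
        obtain ⟨j₀, hj₀⟩ := hm_small c hc
        exact Filter.eventually_atTop.2 ⟨j₀, hj₀⟩
    have hxs_tendsto : Tendsto xs atTop (𝓝 x₀) := by
      rw [Metric.tendsto_atTop]
      intro δ hδ
      obtain ⟨j₀, hj₀⟩ := hxs_close δ hδ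
      exact ⟨j₀, fun j hj => Metric.mem_ball.1 (hj₀ j hj)⟩
    -- a j → φ x₀
    have hψ_tendsto : Tendsto (fun j => ψ (xs j)) atTop (𝓝 (φ x₀)) := by
      have : ContinuousAt ψ x₀ := hψcontV.continuousAt (hV.mem_nhds hx₀V)
      have h := this.tendsto.comp hxs_tendsto
      rwa [hψx₀] at h
    have ha_tendsto : Tendsto a atTop (𝓝 (φ x₀)) := by
      have : Tendsto (fun j => m j + ψ (xs j)) atTop (𝓝 (0 + φ x₀)) :=
        hm_tendsto.add hψ_tendsto
      rw [zero_add] at this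
      convert this using 2 with j
      rw [hmdef]; simp only; ring
    -- the jets at the maximum points
    have hjet : ∀ j, xs j ∈ Metric.ball x₀ r →
        ((a j, fderiv ℝ φ (xs j) + T2 (xs j - x₀),
          fderiv ℝ (fderiv ℝ φ) (xs j) + T2) : Jet2 n) ∈ F := by
      intro j hball
      have hxsV : xs j ∈ V := hKV (hballK hball)
      set φt : EuclideanSpace ℝ (Fin n) → ℝ := fun y => φ y + (q y + m j) with hφtdef
      have hC2 : ContDiffOn ℝ 2 φt (Metric.ball x₀ r) :=
        (hφ.mono (hballK.trans hKV)).add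
          (((contDiff_quad ε x₀).add contDiff_const).contDiffOn)
      have hletest : ∀ y ∈ Metric.ball x₀ r, u j y ≤ ((φt y : ℝ) : EReal) := by
        intro y hy
        have h1 : g j y ≤ ((m j : ℝ) : EReal) := (hxsmax j y (hballK hy)).trans_eq (hgm j)
        have h2 : u j y ≤ ((m j : ℝ) : EReal) + ((ψ y : ℝ) : EReal) :=
          (EReal.sub_le_iff_le_add (Or.inl (by simp)) (Or.inl (by simp))).1 h1
        have h3 : φt y = m j + ψ y := by rw [hφtdef, hψdef]; simp only; ring
        rw [h3]
        exact_mod_cast h2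
      have heqtest : u j (xs j) = ((φt (xs j) : ℝ) : EReal) := by
        rw [hua j]
        have : φt (xs j) = a j := by
          rw [hφtdef, hmdef, hψdef]; simp only; ring
        rw [this]
      have hmemF := hsub j (xs j) (hKX (hballK hball)) φt (Metric.ball x₀ r)
        Metric.isOpen_ball hball hC2 hletest heqtest
      -- identify the jet
      have hDφt : ∀ y ∈ V, HasFDerivAt φt (fderiv ℝ φ y + T2 (y - x₀)) y := by
        intro y hy
        exact ((hφdiff y hy).hasFDerivAt).add ((hasFDerivAt_quad ε x₀ y).add_const (m j))
      have hfd1 : fderiv ℝ φt (xs j) = fderiv ℝ φ (xs j) + T2 (xs j - x₀) :=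
        (hDφt _ hxsV).fderiv
      have hfd_ev : fderiv ℝ φt =ᶠ[𝓝 (xs j)] fun y => fderiv ℝ φ y + T2 (y - x₀) := by
        filter_upwards [hV.mem_nhds hxsV] with y hy using (hDφt y hy).fderiv
      have hfd2 : fderiv ℝ (fun y => fderiv ℝ φt y) (xs j)
          = fderiv ℝ (fderiv ℝ φ) (xs j) + T2 := by
        rw [show (fun y => fderiv ℝ φt y) = fderiv ℝ φt from rfl]
        rw [hfd_ev.fderiv_eq]
        exact (((hDφdiff _ hxsV).hasFDerivAt).add (hasFDerivAt_Dquad ε x₀ (xs j))).fderiv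
      have hval : φt (xs j) = a j := by
        rw [hφtdef, hmdef, hψdef]; simp only; ring
      rw [jet, hval, hfd1, hfd2] at hmemF
      exact hmemF
    -- pass to the limit in j
    obtain ⟨j₁, hj₁⟩ := hxs_close r hr0
    set J : ℕ → Jet2 n := fun j =>
      ((a j, fderiv ℝ φ (xs j) + T2 (xs j - x₀),
        fderiv ℝ (fderiv ℝ φ) (xs j) + T2) : Jet2 n) with hJdef
    have hJF : ∀ᶠ j in atTop, J j ∈ F :=
      Filter.eventually_atTop.2 ⟨j₁, fun j hj => hjet j (hj₁ j hj)⟩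
    have hJlim : Tendsto J atTop
        (𝓝 ((φ x₀, fderiv ℝ φ x₀,
          fderiv ℝ (fun y => fderiv ℝ φ y) x₀ + T2) : Jet2 n)) := by
      refine ha_tendsto.prodMk_nhds (Filter.Tendsto.prodMk_nhds ?_ ?_)
      · have h1 : Tendsto (fun j => fderiv ℝ φ (xs j)) atTop (𝓝 (fderiv ℝ φ x₀)) :=
          (hDφcont.continuousAt (hV.mem_nhds hx₀V)).tendsto.comp hxs_tendsto
        have h2' : Tendsto (fun j => xs j - x₀) atTop (𝓝 0) := by
          have := hxs_tendsto.sub_const x₀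
          rwa [sub_self] at this
        have h2 : Tendsto (fun j => T2 (xs j - x₀)) atTop (𝓝 (T2 0)) :=
          (T2.continuous.tendsto 0).comp h2'
        rw [map_zero] at h2
        have := h1.add h2
        rwa [add_zero] at this
      · have h1 : Tendsto (fun j => fderiv ℝ (fderiv ℝ φ) (xs j)) atTop
            (𝓝 (fderiv ℝ (fderiv ℝ φ) x₀)) :=
          (hD2φcont.continuousAt (hV.mem_nhds hx₀V)).tendsto.comp hxs_tendsto
        exact h1.add tendsto_const_nhds
    exact hF.mem_of_tendsto hJlim hJF
  -- let ε → 0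
  have hseq : Tendsto (fun k : ℕ => ((φ x₀, fderiv ℝ φ x₀,
      fderiv ℝ (fun y => fderiv ℝ φ y) x₀ + (2 * (1 / ((k : ℝ) + 1))) • innerB (EuclideanSpace ℝ (Fin n))) : Jet2 n))
      atTop (𝓝 (jet φ x₀)) := by
    rw [jet]
    refine tendsto_const_nhds.prodMk_nhds (tendsto_const_nhds.prodMk_nhds ?_)
    have h0 : Tendsto (fun k : ℕ => 2 * (1 / ((k : ℝ) + 1))) atTop (𝓝 0) := by
      have := (tendsto_one_div_add_atTop_nhds_zero_nat (𝕜 := ℝ)).const_mul 2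
      simpa using this
    have h1 := h0.smul_const (innerB (EuclideanSpace ℝ (Fin n)))
    have h2 := (tendsto_const_nhds (x := fderiv ℝ (fun y => fderiv ℝ φ y) x₀)
      (f := atTop (α := ℕ))).add h1
    have hz : fderiv ℝ (fun y => fderiv ℝ φ y) x₀ + (0:ℝ) • innerB (EuclideanSpace ℝ (Fin n))
        = fderiv ℝ (fun y => fderiv ℝ φ y) x₀ := by
      ext v w
      simp
    rwa [hz] at h2
  exact hF.mem_of_tendsto hseq (Filter.Eventually.of_forall fun k =>
    main (1 / ((k : ℝ) + 1)) (by positivity))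

end Main
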